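/- arXiv:2302.13479 — 10 statements merged into one kernel-verified Lean document; each statement's English description precedes it below -/
import Mathlib

section
/- For every integer k ≥ 1, F(k+1) − F(k) = H(k) / ((k + 1 + B/(1−B)) · (k + B/(1−B))), and the denominator (k + 1 + B/(1−B)) · (k + B/(1−B)) is strictly positive. -/
/-- Difference formula for the average-cost function `F` in terms of the quadratic `H`,
together with positivity of the denominator. -/
theorem cost_difference_formula (B E : ℝ) (hB0 : 0 ≤ B) (hB1 : B < 1) (hE : 0 < E)
    (F : ℕ → ℝ)
    (hF : ∀ k : ℕ, 1 ≤ k →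
      F k = ((1 - B) / (B + k * (1 - B))) *
        ((k : ℝ) * (k - 1) / 2 + (E + k) / (1 - B) + B / (1 - B) ^ 2))
    (H : ℝ → ℝ)
    (hH : ∀ x : ℝ, H x = x ^ 2 / 2 + (1 / 2 + B / (1 - B)) * x - E / (1 - B)) :
    ∀ k : ℕ, 1 ≤ k →
      F (k + 1) - F k =
        H k / (((k : ℝ) + 1 + B / (1 - B)) * ((k : ℝ) + B / (1 - B))) ∧
      0 < ((k : ℝ) + 1 + B / (1 - B)) * ((k : ℝ) + B / (1 - B)) := by
  intro k hk
  have h1B : (0:ℝ) < 1 - B := by linarith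
  have hk1 : (1:ℝ) ≤ (k:ℝ) := by exact_mod_cast hk
  have hden1 : (0:ℝ) < (k:ℝ) + 1 + B / (1 - B) := by positivity
  have hden2 : (0:ℝ) < (k:ℝ) + B / (1 - B) := by
    have : 0 ≤ B / (1 - B) := div_nonneg hB0 h1B.le
    linarith
  refine ⟨?_, mul_pos hden1 hden2⟩
  have hd1 : (0:ℝ) < B + k * (1 - B) := by nlinarith
  have hd2 : (0:ℝ) < B + (k+1 : ℕ) * (1 - B) := by push_cast; nlinarith
  rw [hF (k+1) (by omega), hF k hk, hH]
  push_cast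
  field_simp
  ring
end

section
/- The function F first decreases and then increases over the positive integers: for every integer k with 1 ≤ k < ⌈σ⌉ one has F(k+1) < F(k), and for every integer k ≥ max{1, ⌈σ⌉} one has F(k+1) ≥ F(k). In particular F attains its minimum over the positive integers at k = max{1, ⌈σ⌉}. -/
set_option maxHeartbeats 1000000 in
/-- `F` first strictly decreases (below `⌈σ⌉`) and then increases (from `max 1 ⌈σ⌉` on)
over the positive integers; in particular its minimum over the positive integers is
attained at `max 1 ⌈σ⌉`. -/
theorem F_unimodal (B E : ℝ) (hB0 : 0 ≤ B) (hB1 : B < 1) (hE : 0 < E)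
    (F : ℤ → ℝ)
    (hF : ∀ k : ℤ, 1 ≤ k →
      F k = ((1 - B) / (B + k * (1 - B))) *
        ((k : ℝ) * (k - 1) / 2 + (E + k) / (1 - B) + B / (1 - B) ^ 2))
    (σ : ℝ)
    (hσ : σ = -(1 + B) / (2 * (1 - B)) +
      Real.sqrt (B ^ 2 / (1 - B) ^ 2 + (B + 2 * E) / (1 - B) + 1 / 4)) :
    (∀ k : ℤ, 1 ≤ k → k < ⌈σ⌉ → F (k + 1) < F k) ∧
    (∀ k : ℤ, max 1 ⌈σ⌉ ≤ k → F k ≤ F (k + 1)) ∧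
    (∀ k : ℤ, 1 ≤ k → F (max 1 ⌈σ⌉) ≤ F k) := by
  have ha : (0:ℝ) < 1 - B := by linarith
  set a : ℝ := 1 - B with ha_def
  -- positivity of denominators
  have hd : ∀ k : ℤ, 1 ≤ k → 0 < B + (k:ℝ) * a := by
    intro k hk
    have h1 : (1:ℝ) ≤ (k:ℝ) := by exact_mod_cast hk
    nlinarith
  -- the difference formula
  have step : ∀ k : ℤ, 1 ≤ k →
      F (k + 1) - F k =
        (a / 2 * (k:ℝ) ^ 2 + (B + a / 2) * (k:ℝ) - E) *
          (a / ((B + (k:ℝ) * a) * (B + ((k:ℝ) + 1) * a))) := by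
    intro k hk
    have h1 := hd k hk
    have h2 : 0 < B + ((k:ℝ) + 1) * a := by
      have := hd (k + 1) (by omega)
      push_cast at this
      linarith
    rw [hF (k + 1) (by omega), hF k hk]
    push_cast
    field_simp
    ring
  -- the key facts about σ
  have hs0 : 0 ≤ Real.sqrt (B ^ 2 / (1 - B) ^ 2 + (B + 2 * E) / (1 - B) + 1 / 4) :=
    Real.sqrt_nonneg _
  have hs2 : (Real.sqrt (B ^ 2 / (1 - B) ^ 2 + (B + 2 * E) / (1 - B) + 1 / 4)) ^ 2 =
      B ^ 2 / (1 - B) ^ 2 + (B + 2 * E) / (1 - B) + 1 / 4 := by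
    apply Real.sq_sqrt
    positivity
  set s : ℝ := Real.sqrt (B ^ 2 / (1 - B) ^ 2 + (B + 2 * E) / (1 - B) + 1 / 4) with hs_def
  have hσs : a * σ + B + a / 2 = a * s := by
    rw [hσ]
    field_simp
    ring
  have key1 : (a * σ + B + a / 2) ^ 2 = (B + a / 2) ^ 2 + 2 * a * E := by
    rw [hσs]
    have : (a * s) ^ 2 = a ^ 2 * s ^ 2 := by ring
    rw [this, hs2, ha_def]
    have hB' : (1:ℝ) - B ≠ 0 := by linarith
    field_simp
    ring
  have key2 : 0 ≤ a * σ + B + a / 2 := by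
    rw [hσs]; positivity
  -- sign lemmas for the numerator
  have Nneg : ∀ x : ℝ, 0 ≤ x → x < σ → a / 2 * x ^ 2 + (B + a / 2) * x - E < 0 := by
    intro x hx hxσ
    have hu : 0 ≤ a * x + B + a / 2 := by nlinarith
    have hlt : a * x + B + a / 2 < a * σ + B + a / 2 := by nlinarith
    have hsq : (a * x + B + a / 2) ^ 2 < (a * σ + B + a / 2) ^ 2 := by
      nlinarith [mul_pos (sub_pos.mpr hlt) (by linarith : 0 < (a * σ + B + a / 2) + (a * x + B + a / 2))]
    have h3 : (a * x + B + a / 2) ^ 2 < (B + a / 2) ^ 2 + 2 * a * E := by rw [key1] at hsq; exact hsq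
    have heq : a / 2 * x ^ 2 + (B + a / 2) * x - E =
        ((a * x + B + a / 2) ^ 2 - (B + a / 2) ^ 2 - 2 * a * E) / (2 * a) := by
      field_simp
      ring
    rw [heq]
    apply div_neg_of_neg_of_pos <;> linarith
  have Npos : ∀ x : ℝ, 0 ≤ x → σ ≤ x → 0 ≤ a / 2 * x ^ 2 + (B + a / 2) * x - E := by
    intro x hx hxσ
    have hle : a * σ + B + a / 2 ≤ a * x + B + a / 2 := by nlinarith
    have hsq : (a * σ + B + a / 2) ^ 2 ≤ (a * x + B + a / 2) ^ 2 := by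
      nlinarith [mul_nonneg (sub_nonneg.mpr hle) (by linarith : 0 ≤ (a * x + B + a / 2) + (a * σ + B + a / 2))]
    have h3 : (B + a / 2) ^ 2 + 2 * a * E ≤ (a * x + B + a / 2) ^ 2 := by rw [key1] at hsq; exact hsq
    have heq : a / 2 * x ^ 2 + (B + a / 2) * x - E =
        ((a * x + B + a / 2) ^ 2 - (B + a / 2) ^ 2 - 2 * a * E) / (2 * a) := by
      field_simp
      ring
    rw [heq]
    apply div_nonneg <;> linarith
  -- part 1
  have part1 : ∀ k : ℤ, 1 ≤ k → k < ⌈σ⌉ → F (k + 1) < F k := by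
    intro k hk hkc
    have hkσ : (k:ℝ) < σ := Int.lt_ceil.mp hkc
    have hk0 : (0:ℝ) ≤ (k:ℝ) := by exact_mod_cast (by omega : (0:ℤ) ≤ k)
    have hN := Nneg (k:ℝ) hk0 hkσ
    have hpos : 0 < a / ((B + (k:ℝ) * a) * (B + ((k:ℝ) + 1) * a)) := by
      have h1 := hd k hk
      have h2 : 0 < B + ((k:ℝ) + 1) * a := by
        have := hd (k + 1) (by omega); push_cast at this; linarith
      positivity
    have := step k hk
    nlinarith [mul_neg_of_neg_of_pos hN hpos]
  -- part 2
  have part2 : ∀ k : ℤ, max 1 ⌈σ⌉ ≤ k → F k ≤ F (k + 1) := by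
    intro k hk
    have hk1 : (1:ℤ) ≤ k := le_trans (le_max_left _ _) hk
    have hkσ : σ ≤ (k:ℝ) := Int.ceil_le.mp (le_trans (le_max_right _ _) hk)
    have hk0 : (0:ℝ) ≤ (k:ℝ) := by exact_mod_cast (by omega : (0:ℤ) ≤ k)
    have hN := Npos (k:ℝ) hk0 hkσ
    have hpos : 0 < a / ((B + (k:ℝ) * a) * (B + ((k:ℝ) + 1) * a)) := by
      have h1 := hd k hk1
      have h2 : 0 < B + ((k:ℝ) + 1) * a := by
        have := hd (k + 1) (by omega); push_cast at this; linarith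
      positivity
    have := step k hk1
    nlinarith [mul_nonneg hN hpos.le]
  refine ⟨part1, part2, ?_⟩
  -- part 3
  intro k hk
  set m : ℤ := max 1 ⌈σ⌉ with hm
  have hm1 : (1:ℤ) ≤ m := le_max_left _ _
  rcases le_or_gt m k with h | h
  · -- upward induction from m
    exact Int.le_induction (motive := fun n _ => F m ≤ F n) le_rfl (fun n hn ih => le_trans ih (part2 n hn)) k h
  · -- downward induction: k < m, so 1 ≤ k < m
    have down : ∀ n : ℤ, n ≤ m → 1 ≤ n → F m ≤ F n := by
      refine Int.le_induction_down (motive := fun n _ => 1 ≤ n → F m ≤ F n) (fun _ => le_rfl) ?_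
      intro n hn ih h1
      have hn1 : (1:ℤ) ≤ n := by omega
      have hlt : n - 1 < ⌈σ⌉ := by omega
      have hd1 := part1 (n - 1) h1 hlt
      simp only [sub_add_cancel] at hd1
      exact le_trans (ih hn1) hd1.le
    exact down k h.le hk
end

section
/- (Theorem 4 of the paper, restated for the explicit cost function.) For every integer δ ≥ 1, the minimum of F over the integers k ≥ δ is attained at k_UB = max{δ, ⌈σ⌉}; that is, F(max{δ, ⌈σ⌉}) ≤ F(k) for every integer k ≥ δ. -/
/-- Theorem 4: over the integers `k ≥ δ`, the cost `F` is minimized at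
`k_UB = max {δ, ⌈σ⌉}`. -/
theorem min_over_tail (B E : ℝ) (hB0 : 0 ≤ B) (hB1 : B < 1) (hE : 0 < E)
    (F : ℤ → ℝ)
    (hF : ∀ k : ℤ, 1 ≤ k →
      F k = ((1 - B) / (B + k * (1 - B))) *
        ((k : ℝ) * (k - 1) / 2 + (E + k) / (1 - B) + B / (1 - B) ^ 2))
    (σ : ℝ)
    (hσ : σ = -(1 + B) / (2 * (1 - B)) +
      Real.sqrt (B ^ 2 / (1 - B) ^ 2 + (B + 2 * E) / (1 - B) + 1 / 4)) :
    ∀ δ : ℤ, 1 ≤ δ → ∀ k : ℤ, δ ≤ k → F (max δ ⌈σ⌉) ≤ F k := by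
  have ha : (0:ℝ) < 1 - B := by linarith
  set R : ℝ := B ^ 2 / (1 - B) ^ 2 + (B + 2 * E) / (1 - B) + 1 / 4 with hR
  have hR0 : 0 ≤ R := by
    have h1 : 0 ≤ B ^ 2 / (1 - B) ^ 2 := by positivity
    have h2 : 0 ≤ (B + 2 * E) / (1 - B) := div_nonneg (by linarith) ha.le
    rw [hR]; linarith
  set s : ℝ := Real.sqrt R with hs
  have hs2 : s ^ 2 = R := Real.sq_sqrt hR0
  set q : ℝ → ℝ := fun x => (1 - B) * x ^ 2 / 2 + ((1 - B) / 2 + B) * x - E with hq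
  -- q σ = 0
  have key : 2 * (1 - B) * σ + (1 + B) = 2 * (1 - B) * s := by rw [hσ]; field_simp; ring
  have h1 : (2 * (1 - B) * σ + (1 + B)) ^ 2 = 4 * (1 - B) ^ 2 * R := by
    rw [key]; rw [mul_pow, mul_pow]; rw [hs2]; ring
  have h2 : 4 * (1 - B) ^ 2 * R = (1 + B) ^ 2 + 8 * (1 - B) * E := by
    rw [hR]; field_simp; ring
  have hqσ : q σ = 0 := by
    have h3 : 8 * (1 - B) * q σ = 0 := by
      simp only [hq]; linear_combination h1 + h2
    have h8 : (8 : ℝ) * (1 - B) ≠ 0 := by positivity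
    exact (mul_eq_zero.mp h3).resolve_left h8
  have hqmono : ∀ x y : ℝ, 0 ≤ x → x ≤ y → q x ≤ q y := by
    intro x y hx hxy
    have hxy' : 0 ≤ (y - x) * (y + x) := by
      apply mul_nonneg (by linarith); linarith
    simp only [hq]; nlinarith
  have hD : ∀ j : ℤ, 1 ≤ j → (0:ℝ) < B + (j:ℝ) * (1 - B) := by
    intro j hj
    have : (1:ℝ) ≤ (j:ℝ) := by exact_mod_cast hj
    nlinarith
  have hFM : ∀ j : ℤ, 1 ≤ j → F j =
      ((1 - B) ^ 2 * (j:ℝ) * ((j:ℝ) - 1) / 2 + (1 - B) * (E + (j:ℝ)) + B) /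
        ((1 - B) * (B + (j:ℝ) * (1 - B))) := by
    intro j hj
    rw [hF j hj]
    have hDj := hD j hj
    field_simp
  have step_le : ∀ j : ℤ, 1 ≤ j → (j:ℝ) ≤ σ → F (j + 1) ≤ F j := by
    intro j hj hjσ
    have hj0 : (0:ℝ) ≤ (j:ℝ) := by exact_mod_cast (by linarith : (0:ℤ) ≤ j)
    have hqj : q (j:ℝ) ≤ 0 := by
      have := hqmono (j:ℝ) σ hj0 hjσ
      linarith [hqσ]
    have hq3 : (1 - B) ^ 3 * ((1 - B) * (j:ℝ) ^ 2 / 2 + ((1 - B) / 2 + B) * (j:ℝ) - E) ≤ 0 := by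
      apply mul_nonpos_of_nonneg_of_nonpos (by positivity)
      simpa [hq] using hqj
    have hD1 := hD j hj
    have hD2 := hD (j + 1) (by linarith)
    have hid : ((1-B)^2*((j:ℝ)+1)*(((j:ℝ)+1)-1)/2 + (1-B)*(E+((j:ℝ)+1)) + B) *
          ((1-B)*(B+(j:ℝ)*(1-B))) -
        ((1-B)^2*(j:ℝ)*((j:ℝ)-1)/2 + (1-B)*(E+(j:ℝ)) + B) *
          ((1-B)*(B+((j:ℝ)+1)*(1-B))) =
        (1-B)^3 * ((1-B)*(j:ℝ)^2/2 + ((1-B)/2+B)*(j:ℝ) - E) := by ring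
    rw [hFM j hj, hFM (j + 1) (by linarith)]
    rw [div_le_div_iff₀ (mul_pos ha hD2) (mul_pos ha hD1)]
    push_cast
    linarith [hid, hq3]
  have step_ge : ∀ j : ℤ, 1 ≤ j → σ ≤ (j:ℝ) → F j ≤ F (j + 1) := by
    intro j hj hjσ
    have hσ0 : 0 ≤ σ := by
      have hReq : R = ((1+B)/(2*(1-B)))^2 + 2*E/(1-B) := by rw [hR]; field_simp; ring
      have hcs : (1+B)/(2*(1-B)) < s := by
        rw [hs]
        refine (Real.lt_sqrt (by positivity)).mpr ?_
        rw [hReq]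
        have : 0 < 2*E/(1-B) := by positivity
        linarith
      rw [hσ, neg_div]
      linarith
    have hqj : 0 ≤ q (j:ℝ) := by
      have := hqmono σ (j:ℝ) hσ0 hjσ
      linarith [hqσ]
    have hq3 : 0 ≤ (1 - B) ^ 3 * ((1 - B) * (j:ℝ) ^ 2 / 2 + ((1 - B) / 2 + B) * (j:ℝ) - E) := by
      apply mul_nonneg (by positivity)
      simpa [hq] using hqj
    have hD1 := hD j hj
    have hD2 := hD (j + 1) (by linarith)
    have hid : ((1-B)^2*((j:ℝ)+1)*(((j:ℝ)+1)-1)/2 + (1-B)*(E+((j:ℝ)+1)) + B) *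
          ((1-B)*(B+(j:ℝ)*(1-B))) -
        ((1-B)^2*(j:ℝ)*((j:ℝ)-1)/2 + (1-B)*(E+(j:ℝ)) + B) *
          ((1-B)*(B+((j:ℝ)+1)*(1-B))) =
        (1-B)^3 * ((1-B)*(j:ℝ)^2/2 + ((1-B)/2+B)*(j:ℝ) - E) := by ring
    rw [hFM j hj, hFM (j + 1) (by linarith)]
    rw [div_le_div_iff₀ (mul_pos ha hD1) (mul_pos ha hD2)]
    push_cast
    linarith [hid, hq3]
  have up : ∀ m : ℤ, 1 ≤ m → σ ≤ (m:ℝ) → ∀ j : ℤ, m ≤ j → F m ≤ F j := by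
    intro m hm hσm
    refine Int.le_induction (le_refl _) ?_
    intro n hn ih
    have h1 : 1 ≤ n := le_trans hm hn
    have h2 : σ ≤ (n:ℝ) := le_trans hσm (by exact_mod_cast hn)
    exact ih.trans (step_ge n h1 h2)
  have down : ∀ j : ℤ, 1 ≤ j → ∀ m : ℤ, j ≤ m → m ≤ ⌈σ⌉ → F m ≤ F j := by
    intro j hj
    refine Int.le_induction (fun _ => le_refl _) ?_
    intro n hn ih hn1
    have hnc : n < ⌈σ⌉ := by linarith
    have hns : (n:ℝ) < σ := Int.lt_ceil.mp hnc
    exact (step_le n (le_trans hj hn) hns.le).trans (ih (by linarith))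
  intro δ hδ k hk
  rcases le_or_gt ⌈σ⌉ δ with h | h
  · rw [max_eq_left h]
    exact up δ hδ (Int.ceil_le.mp h) k hk
  · rw [max_eq_right h.le]
    rcases le_or_gt ⌈σ⌉ k with h2 | h2
    · exact up ⌈σ⌉ (by linarith) (Int.le_ceil σ) k h2
    · exact down k (by linarith) ⌈σ⌉ h2.le le_rfl
end

section
/- The average Lagrangian cost under the stationary distribution equals the closed-form expression of Theorem 3 in the constant-distortion case: Σ_{Δ=1}^{k−1} Δ·z_Δ + Σ_{Δ=k}^{∞} (Δ + E)·z_Δ = ((1−B)/(B + k(1−B))) · (k(k−1)/2 + (E+k)/(1−B) + B/(1−B)²), where both series converge. -/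
/-- The average Lagrangian cost under the stationary distribution of the threshold-`k`
policy equals the closed-form expression of Theorem 3 (constant-distortion case). -/
theorem average_lagrangian_cost (k : ℕ) (hk : 1 ≤ k) (B E : ℝ) (hB0 : 0 ≤ B)
    (hB1 : B < 1) (hE : 0 < E)
    (z : ℕ → ℝ)
    (hz1 : ∀ Δ : ℕ, 1 ≤ Δ → Δ ≤ k → z Δ = ((k : ℝ) - 1 + 1 / (1 - B))⁻¹)
    (hz2 : ∀ Δ : ℕ, k ≤ Δ → z Δ = ((k : ℝ) - 1 + 1 / (1 - B))⁻¹ * B ^ (Δ - k)) :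
    ∃ S : ℝ,
      HasSum (fun n : ℕ => (((k + n : ℕ) : ℝ) + E) * z (k + n)) S ∧
      (∑ Δ ∈ Finset.Icc 1 (k - 1), (Δ : ℝ) * z Δ) + S =
        ((1 - B) / (B + k * (1 - B))) *
          ((k : ℝ) * (k - 1) / 2 + (E + k) / (1 - B) + B / (1 - B) ^ 2) := by
  have hB : (0:ℝ) < 1 - B := by linarith
  set z₁ : ℝ := ((k : ℝ) - 1 + 1 / (1 - B))⁻¹ with hz₁def
  have hk1 : (1:ℝ) ≤ (k:ℝ) := by exact_mod_cast hk
  have hD : (0:ℝ) < B + k * (1 - B) := by nlinarith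
  have hzval : z₁ = (1 - B) / (B + k * (1 - B)) := by
    have ha : (k:ℝ) - 1 + 1 / (1 - B) = (B + k * (1 - B)) / (1 - B) := by
      field_simp; ring
    rw [hz₁def, ha, inv_div]
  -- geometric series
  have h1 : HasSum (fun n : ℕ => B ^ n) (1 - B)⁻¹ :=
    hasSum_geometric_of_lt_one hB0 hB1
  have h2 : HasSum (fun n : ℕ => (n : ℝ) * B ^ n) (B / (1 - B) ^ 2) :=
    hasSum_coe_mul_geometric_of_norm_lt_one
      (by rw [Real.norm_eq_abs, abs_lt]; constructor <;> linarith)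
  have hS : HasSum (fun n : ℕ => (((k + n : ℕ) : ℝ) + E) * z (k + n))
      (z₁ * (((k:ℝ) + E) / (1 - B) + B / (1 - B) ^ 2)) := by
    have h3 : HasSum (fun n : ℕ => (((k:ℝ) + E) * z₁) * B ^ n + z₁ * ((n:ℝ) * B ^ n))
        ((((k:ℝ) + E) * z₁) * (1 - B)⁻¹ + z₁ * (B / (1 - B) ^ 2)) :=
      (h1.mul_left _).add (h2.mul_left _)
    have heq : (fun n : ℕ => (((k + n : ℕ) : ℝ) + E) * z (k + n)) =
        fun n : ℕ => (((k:ℝ) + E) * z₁) * B ^ n + z₁ * ((n:ℝ) * B ^ n) := by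
      funext n
      rw [hz2 (k + n) (Nat.le_add_right _ _), Nat.add_sub_cancel_left]
      push_cast
      ring
    rw [heq]
    convert h3 using 1
    field_simp
  refine ⟨_, hS, ?_⟩
  have hfin : (∑ Δ ∈ Finset.Icc 1 (k - 1), (Δ : ℝ) * z Δ)
      = z₁ * ((k:ℝ) * ((k:ℝ) - 1) / 2) := by
    have : ∀ Δ ∈ Finset.Icc 1 (k - 1), (Δ : ℝ) * z Δ = (Δ : ℝ) * z₁ := by
      intro Δ hΔ
      rw [Finset.mem_Icc] at hΔ
      rw [hz1 Δ hΔ.1 (le_trans hΔ.2 (Nat.sub_le _ _))]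
    rw [Finset.sum_congr rfl this, ← Finset.sum_mul]
    have hnat : (∑ Δ ∈ Finset.Icc 1 (k - 1), Δ) * 2 = k * (k - 1) := by
      have hr : ∑ Δ ∈ Finset.Icc 1 (k - 1), Δ = ∑ Δ ∈ Finset.range k, Δ := by
        rw [Finset.range_eq_Ico, ← Finset.Ico_add_one_right_eq_Icc]
        have h9 : k - 1 + 1 = k := by omega
        rw [h9, Finset.sum_eq_sum_Ico_succ_bot hk]
        simp
      rw [hr, Finset.sum_range_id_mul_two]
    have hcast : (∑ Δ ∈ Finset.Icc 1 (k - 1), (Δ:ℝ)) = (k:ℝ) * ((k:ℝ) - 1) / 2 := by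
      have := congrArg (fun n : ℕ => (n : ℝ)) hnat
      push_cast at this
      have hk' : ((k - 1 : ℕ) : ℝ) = (k:ℝ) - 1 := by
        have := Nat.cast_sub hk (R := ℝ); simpa using this
      rw [hk'] at this
      linarith
    rw [hcast]; ring
  rw [hfin, hzval]
  field_simp
  ring
end

section
/- The long-term average energy consumption of the threshold-k policy in the constant-distortion case equals W·Σ_{Δ=k}^{∞} z_Δ = W / ((k−1)(1−B) + 1), where the series converges. -/
/-- The long-term average energy consumption of the threshold-`k` policy in the
constant-distortion case: `W · Σ_{Δ ≥ k} z_Δ = W / ((k−1)(1−B) + 1)`. -/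
theorem average_energy_cost (k : ℕ) (hk : 1 ≤ k) (B W : ℝ) (hB0 : 0 ≤ B) (hB1 : B < 1)
    (hW0 : 0 < W) (hW1 : W ≤ 1)
    (z : ℕ → ℝ)
    (hz1 : ∀ Δ : ℕ, 1 ≤ Δ → Δ ≤ k → z Δ = ((k : ℝ) - 1 + 1 / (1 - B))⁻¹)
    (hz2 : ∀ Δ : ℕ, k ≤ Δ → z Δ = ((k : ℝ) - 1 + 1 / (1 - B))⁻¹ * B ^ (Δ - k)) :
    HasSum (fun n : ℕ => W * z (k + n)) (W / (((k : ℝ) - 1) * (1 - B) + 1)) := by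
  have h1B : (0:ℝ) < 1 - B := by linarith
  set z1 : ℝ := ((k : ℝ) - 1 + 1 / (1 - B))⁻¹ with hz1def
  have hfun : (fun n : ℕ => W * z (k + n)) = fun n : ℕ => (W * z1) * B ^ n := by
    funext n
    rw [hz2 (k + n) (Nat.le_add_right k n)]
    simp [Nat.add_sub_cancel_left, mul_assoc]
  rw [hfun]
  have hgeo : HasSum (fun n : ℕ => (W * z1) * B ^ n) ((W * z1) * (1 - B)⁻¹) :=
    (hasSum_geometric_of_lt_one hB0 hB1).mul_left _
  convert hgeo using 1
  have hk1 : (1:ℝ) ≤ (k:ℝ) := by exact_mod_cast hk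
  have hz1pos : (0:ℝ) < (k : ℝ) - 1 + 1 / (1 - B) := by
    have := one_div_pos.mpr h1B; linarith
  have hd : ((k:ℝ) - 1) * (1 - B) + 1 = ((k:ℝ) - 1 + 1 / (1 - B)) * (1 - B) := by
    field_simp
  rw [hd, hz1def, div_eq_mul_inv, mul_inv]
  ring
end

section
/- (Lemma 1(i) via value iteration.) For every n ≥ 0, the value-iteration function V_n is nondecreasing in the age coordinate: for all integers Δ₁, Δ₂ with 1 ≤ Δ₁ ≤ Δ₂ and every Λ ∈ {0,…,M}, V_n(Δ₁, Λ) ≤ V_n(Δ₂, Λ). -/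
/-- Value-iteration functions for the discounted age-plus-energy MDP with
age-dependent distortion requirement. `VI M P p α β D n Δ Λ` is `V_n(Δ, Λ)`. -/
noncomputable def VI (M : ℕ) (P : ℕ → ℝ) (p α β : ℝ) (D : ℕ → ℕ) :
    ℕ → ℕ → ℕ → ℝ
  | 0 => fun _ _ => 0
  | n + 1 => fun Δ Λ =>
      let En : ℕ → ℝ := fun d => ∑ l ∈ Finset.range (M + 1), P l * VI M P p α β D n d l
      let Q0 : ℝ := (Δ : ℝ) + α * En (Δ + 1)
      let Q1 : ℝ := (Δ : ℝ) + β + α * (p * En (Δ + 1) + (1 - p) * En 1)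
      if D Δ ≤ Λ then min Q0 Q1 else Q0

/-- Lemma 1(i): each value-iteration function is nondecreasing in the age coordinate. -/
theorem VI_monotone_in_age (M : ℕ) (P : ℕ → ℝ) (p α β : ℝ) (D : ℕ → ℕ)
    (hP : ∀ l, 0 ≤ P l) (hPsum : ∑ l ∈ Finset.range (M + 1), P l = 1)
    (hp0 : 0 ≤ p) (hp1 : p ≤ 1) (hα0 : 0 < α) (hα1 : α < 1) (hβ : 0 ≤ β)
    (hD : Monotone D) :
    ∀ n : ℕ, ∀ Δ₁ Δ₂ Λ : ℕ, 1 ≤ Δ₁ → Δ₁ ≤ Δ₂ → Λ ≤ M →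
      VI M P p α β D n Δ₁ Λ ≤ VI M P p α β D n Δ₂ Λ := by
  intro n
  induction n with
  | zero => intro Δ₁ Δ₂ Λ _ _ _; simp [VI]
  | succ n ih =>
    intro Δ₁ Δ₂ Λ h1 h12 hΛ
    have hEn : ∀ d₁ d₂ : ℕ, 1 ≤ d₁ → d₁ ≤ d₂ →
        (∑ l ∈ Finset.range (M + 1), P l * VI M P p α β D n d₁ l) ≤
        ∑ l ∈ Finset.range (M + 1), P l * VI M P p α β D n d₂ l := by
      intro d₁ d₂ hd1 hd12
      refine Finset.sum_le_sum fun l hl => ?_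
      exact mul_le_mul_of_nonneg_left
        (ih d₁ d₂ l hd1 hd12 (Nat.lt_succ_iff.mp (Finset.mem_range.mp hl))) (hP l)
    set En : ℕ → ℝ := fun d => ∑ l ∈ Finset.range (M + 1), P l * VI M P p α β D n d l with hEndef
    have hEmono : En (Δ₁ + 1) ≤ En (Δ₂ + 1) :=
      hEn _ _ (Nat.le_add_left 1 Δ₁) (by omega)
    have hΔ : (Δ₁ : ℝ) ≤ (Δ₂ : ℝ) := Nat.cast_le.mpr h12
    have hQ0 : (Δ₁ : ℝ) + α * En (Δ₁ + 1) ≤ (Δ₂ : ℝ) + α * En (Δ₂ + 1) :=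
      add_le_add hΔ (mul_le_mul_of_nonneg_left hEmono hα0.le)
    have hQ1 : (Δ₁ : ℝ) + β + α * (p * En (Δ₁ + 1) + (1 - p) * En 1) ≤
        (Δ₂ : ℝ) + β + α * (p * En (Δ₂ + 1) + (1 - p) * En 1) := by
      gcongr
    show (if D Δ₁ ≤ Λ then _ else _) ≤ (if D Δ₂ ≤ Λ then _ else _)
    by_cases h2 : D Δ₂ ≤ Λ
    · have h1' : D Δ₁ ≤ Λ := le_trans (hD h12) h2
      simp only [h1', h2, if_true]
      exact min_le_min hQ0 hQ1
    · by_cases h1' : D Δ₁ ≤ Λ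
      · simp only [h1', h2, if_true, if_false]
        exact le_trans (min_le_left _ _) hQ0
      · simp only [h1', h2, if_false]
        exact hQ0
end

section
/- For every n ≥ 0, the advantage of transmitting, Q¹_{n+1}(Δ) − Q⁰_{n+1}(Δ) = β + α(1−p)·(E_n(1) − E_n(Δ+1)), is nonincreasing in the age: for all integers 1 ≤ Δ₁ ≤ Δ₂, Q¹_{n+1}(Δ₂) − Q⁰_{n+1}(Δ₂) ≤ Q¹_{n+1}(Δ₁) − Q⁰_{n+1}(Δ₁). -/
/-- `EnVI M P p α β D n Δ = E_n(Δ) = Σ_{Λ'=0}^{M} P(Λ')·V_n(Δ, Λ')`. -/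
noncomputable def EnVI (M : ℕ) (P : ℕ → ℝ) (p α β : ℝ) (D : ℕ → ℕ) (n Δ : ℕ) : ℝ :=
  ∑ l ∈ Finset.range (M + 1), P l * VI M P p α β D n Δ l

/-- `Qzero M P p α β D n Δ = Q⁰_{n+1}(Δ)`, the no-transmission cost-to-go. -/
noncomputable def Qzero (M : ℕ) (P : ℕ → ℝ) (p α β : ℝ) (D : ℕ → ℕ) (n Δ : ℕ) : ℝ :=
  (Δ : ℝ) + α * EnVI M P p α β D n (Δ + 1)

/-- `Qone M P p α β D n Δ = Q¹_{n+1}(Δ)`, the transmission cost-to-go. -/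
noncomputable def Qone (M : ℕ) (P : ℕ → ℝ) (p α β : ℝ) (D : ℕ → ℕ) (n Δ : ℕ) : ℝ :=
  (Δ : ℝ) + β + α * (p * EnVI M P p α β D n (Δ + 1) + (1 - p) * EnVI M P p α β D n 1)


lemma VI_mono (M : ℕ) (P : ℕ → ℝ) (p α β : ℝ) (D : ℕ → ℕ)
    (hP : ∀ l, 0 ≤ P l) (hp0 : 0 ≤ p) (hp1 : p ≤ 1) (hα0 : 0 < α)
    (hD : Monotone D) :
    ∀ n Δ₁ Δ₂ Λ : ℕ, Δ₁ ≤ Δ₂ →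
      VI M P p α β D n Δ₁ Λ ≤ VI M P p α β D n Δ₂ Λ := by
  intro n
  induction n with
  | zero => intro Δ₁ Δ₂ Λ h; simp [VI]
  | succ n ih =>
    intro Δ₁ Δ₂ Λ h
    set En : ℕ → ℝ := fun d => ∑ l ∈ Finset.range (M + 1), P l * VI M P p α β D n d l with hEn
    have hE : ∀ d₁ d₂ : ℕ, d₁ ≤ d₂ → En d₁ ≤ En d₂ := by
      intro d₁ d₂ hd
      exact Finset.sum_le_sum fun l _ =>
        mul_le_mul_of_nonneg_left (ih d₁ d₂ l hd) (hP l)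
    have hQ0 : (Δ₁ : ℝ) + α * En (Δ₁ + 1) ≤ (Δ₂ : ℝ) + α * En (Δ₂ + 1) :=
      add_le_add (Nat.cast_le.2 h)
        (mul_le_mul_of_nonneg_left (hE _ _ (by omega)) hα0.le)
    have hQ1 : (Δ₁ : ℝ) + β + α * (p * En (Δ₁ + 1) + (1 - p) * En 1) ≤
        (Δ₂ : ℝ) + β + α * (p * En (Δ₂ + 1) + (1 - p) * En 1) := by
      have : p * En (Δ₁ + 1) ≤ p * En (Δ₂ + 1) :=
        mul_le_mul_of_nonneg_left (hE _ _ (by omega)) hp0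
      have h2 : α * (p * En (Δ₁ + 1) + (1 - p) * En 1) ≤
          α * (p * En (Δ₂ + 1) + (1 - p) * En 1) := by
        apply mul_le_mul_of_nonneg_left _ hα0.le
        linarith
      have := (Nat.cast_le (α := ℝ)).2 h
      linarith
    show (if D Δ₁ ≤ Λ then _ else _) ≤ (if D Δ₂ ≤ Λ then _ else _)
    split_ifs with h1 h2 h2
    · exact min_le_min hQ0 hQ1
    · exact le_trans (min_le_left _ _) hQ0
    · exact absurd (le_trans (hD h) h2) h1
    · exact hQ0

lemma EnVI_mono (M : ℕ) (P : ℕ → ℝ) (p α β : ℝ) (D : ℕ → ℕ)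
    (hP : ∀ l, 0 ≤ P l) (hp0 : 0 ≤ p) (hp1 : p ≤ 1) (hα0 : 0 < α)
    (hD : Monotone D) {n Δ₁ Δ₂ : ℕ} (h : Δ₁ ≤ Δ₂) :
    EnVI M P p α β D n Δ₁ ≤ EnVI M P p α β D n Δ₂ :=
  Finset.sum_le_sum fun l _ =>
    mul_le_mul_of_nonneg_left (VI_mono M P p α β D hP hp0 hp1 hα0 hD n Δ₁ Δ₂ l h) (hP l)

/-- The advantage of transmitting equals `β + α(1−p)(E_n(1) − E_n(Δ+1))` and is
nonincreasing in the age. -/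
theorem advantage_formula_and_antitone (M : ℕ) (P : ℕ → ℝ) (p α β : ℝ) (D : ℕ → ℕ)
    (hP : ∀ l, 0 ≤ P l) (hPsum : ∑ l ∈ Finset.range (M + 1), P l = 1)
    (hp0 : 0 ≤ p) (hp1 : p ≤ 1) (hα0 : 0 < α) (hα1 : α < 1) (hβ : 0 ≤ β)
    (hD : Monotone D) :
    ∀ n : ℕ,
      (∀ Δ : ℕ, 1 ≤ Δ →
        Qone M P p α β D n Δ - Qzero M P p α β D n Δ =
          β + α * (1 - p) * (EnVI M P p α β D n 1 - EnVI M P p α β D n (Δ + 1))) ∧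
      (∀ Δ₁ Δ₂ : ℕ, 1 ≤ Δ₁ → Δ₁ ≤ Δ₂ →
        Qone M P p α β D n Δ₂ - Qzero M P p α β D n Δ₂ ≤
          Qone M P p α β D n Δ₁ - Qzero M P p α β D n Δ₁) := by
  intro n
  constructor
  · intro Δ _
    simp only [Qone, Qzero]
    ring
  · intro Δ₁ Δ₂ h1 h12
    simp only [Qone, Qzero]
    have hE := EnVI_mono M P p α β D hP hp0 hp1 hα0 hD
      (n := n) (Δ₁ := Δ₁ + 1) (Δ₂ := Δ₂ + 1) (by omega)
    nlinarith [mul_nonneg (mul_nonneg hα0.le (by linarith : (0:ℝ) ≤ 1 - p))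
      (sub_nonneg.2 hE)]
end

section
/- (Theorem 5(i), first half.) If β·W > 1, then the threshold function p ↦ G(W, p; β) is strictly increasing on [0, 1): for all 0 ≤ p₁ < p₂ < 1, G(W, p₁; β) < G(W, p₂; β). -/
/-- The optimal-threshold function `G(W, p; β)` of Corollary 1, with
`R = 1 − (1−p)·W`. -/
noncomputable def G (W p β : ℝ) : ℝ :=
  let R := 1 - (1 - p) * W;
  -(1 + R) / (2 * (1 - R)) +
    Real.sqrt (R ^ 2 / (1 - R) ^ 2 + (R + 2 * β * W) / (1 - R) + 1 / 4)

lemma G_key (c x₁ x₂ : ℝ) (hc : 2 < c) (hx1 : 1 ≤ x₁) (h12 : x₁ < x₂) :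
    Real.sqrt ((x₁ - 1/2)^2 + c*x₁) - (x₁ - 1/2) <
    Real.sqrt ((x₂ - 1/2)^2 + c*x₂) - (x₂ - 1/2) := by
  have hg₁ : (0:ℝ) ≤ (x₁ - 1/2)^2 + c*x₁ := by nlinarith [sq_nonneg (x₁ - 1/2)]
  have hs₁ : Real.sqrt ((x₁ - 1/2)^2 + c*x₁) ^ 2 = (x₁ - 1/2)^2 + c*x₁ :=
    Real.sq_sqrt hg₁
  have hs₁nn : 0 ≤ Real.sqrt ((x₁ - 1/2)^2 + c*x₁) := Real.sqrt_nonneg _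
  have hlt : Real.sqrt ((x₁ - 1/2)^2 + c*x₁) < (2*x₁ - 1 + c)/2 := by
    have hy : 0 < (2*x₁ - 1 + c)/2 := by linarith
    rw [Real.sqrt_lt' hy]
    nlinarith
  have key2 : Real.sqrt ((x₁ - 1/2)^2 + c*x₁) + (x₂ - x₁)
      < Real.sqrt ((x₂ - 1/2)^2 + c*x₂) := by
    have hx : 0 ≤ Real.sqrt ((x₁ - 1/2)^2 + c*x₁) + (x₂ - x₁) := by linarith
    rw [show Real.sqrt ((x₁ - 1/2)^2 + c*x₁) + (x₂ - x₁)
          < Real.sqrt ((x₂ - 1/2)^2 + c*x₂) ↔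
        (Real.sqrt ((x₁ - 1/2)^2 + c*x₁) + (x₂ - x₁))^2
          < (x₂ - 1/2)^2 + c*x₂ from Real.lt_sqrt hx]
    nlinarith [mul_lt_mul_of_pos_right hlt (show (0:ℝ) < x₂ - x₁ by linarith), hs₁]
  linarith

lemma G_eq (W p β : ℝ) (hW0 : 0 < W) (hp : p < 1) :
    G W p β = Real.sqrt ((1/((1-p)*W) - 1/2)^2 + (2*β*W)*(1/((1-p)*W)))
      - (1/((1-p)*W) - 1/2) := by
  have hq0 : 0 < (1-p)*W := mul_pos (by linarith) hW0
  have hq0' : (1-p)*W ≠ 0 := ne_of_gt hq0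
  have hp1' : (1:ℝ) - p ≠ 0 := (show (0:ℝ) < 1 - p by linarith).ne'
  have hW' : W ≠ 0 := hW0.ne'
  unfold G
  simp only []
  have h1 : 1 - (1 - (1-p)*W) = (1-p)*W := by ring
  have harg : (1 - (1-p)*W)^2 / (1 - (1 - (1-p)*W))^2
      + ((1 - (1-p)*W) + 2*β*W) / (1 - (1 - (1-p)*W)) + 1/4
      = (1/((1-p)*W) - 1/2)^2 + (2*β*W)*(1/((1-p)*W)) := by
    rw [h1]; field_simp; ring
  have hfirst : -(1 + (1 - (1-p)*W)) / (2*(1 - (1 - (1-p)*W)))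
      = -(1/((1-p)*W) - 1/2) := by
    rw [h1]; field_simp; ring
  rw [harg, hfirst]; ring

/-- Theorem 5(i), first half: if `β·W > 1` then `p ↦ G(W, p; β)` is strictly
increasing on `[0, 1)`. -/
theorem G_strictMono_in_p (β W : ℝ) (hβ : 0 ≤ β) (hW0 : 0 < W) (hW1 : W ≤ 1)
    (h : 1 < β * W) :
    ∀ p₁ p₂ : ℝ, 0 ≤ p₁ → p₁ < p₂ → p₂ < 1 → G W p₁ β < G W p₂ β := by
  intro p₁ p₂ hp₁ h12 hp₂
  have hp₁1 : p₁ < 1 := lt_trans h12 hp₂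
  rw [G_eq W p₁ β hW0 hp₁1, G_eq W p₂ β hW0 hp₂]
  have hq₁ : 0 < (1-p₁)*W := by nlinarith
  have hq₂ : 0 < (1-p₂)*W := by nlinarith
  have hx1 : 1 ≤ 1/((1-p₁)*W) := by
    rw [le_div_iff₀ hq₁]; nlinarith
  have hxlt : 1/((1-p₁)*W) < 1/((1-p₂)*W) := by
    apply one_div_lt_one_div_of_lt hq₂; nlinarith
  exact G_key (2*β*W) _ _ (by nlinarith) hx1 hxlt
end

section
/- (Theorem 5(ii).) If β·W < 1, then G(W, p; β) < 1 for every p ∈ [0,1); consequently the optimal threshold max{1, ⌈G(W, p; β)⌉} equals 1. The key inequality is R²/(1−R)² + (R + 2βW)/(1−R) + 1/4 < (1 + (1+R)/(2(1−R)))² whenever βW < 1 and 0 ≤ R < 1. -/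
lemma key_ineq (β W R : ℝ) (h : β * W < 1) (hR1 : R < 1) :
    R ^ 2 / (1 - R) ^ 2 + (R + 2 * β * W) / (1 - R) + 1 / 4 <
      (1 + (1 + R) / (2 * (1 - R))) ^ 2 := by
  have ha : (0:ℝ) < 1 - R := by linarith
  have key : (1 + (1 + R) / (2 * (1 - R))) ^ 2 -
      (R ^ 2 / (1 - R) ^ 2 + (R + 2 * β * W) / (1 - R) + 1 / 4)
      = 2 * (1 - β * W) / (1 - R) := by
    field_simp
    ring
  have h1 : 0 < 1 - β * W := by linarith
  have : 0 < 2 * (1 - β * W) / (1 - R) := by positivity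
  linarith

/-- Theorem 5(ii): if `β·W < 1` then `G(W, p; β) < 1`, hence the optimal threshold
`max {1, ⌈G⌉}` equals `1`; the key inequality compares the radicand with the square of
`1 + (1+R)/(2(1−R))`. -/
theorem threshold_is_one (β W : ℝ) (hβ : 0 ≤ β) (hW0 : 0 < W) (hW1 : W ≤ 1)
    (h : β * W < 1) :
    (∀ p : ℝ, 0 ≤ p → p < 1 → G W p β < 1 ∧ max 1 ⌈G W p β⌉ = 1) ∧
    (∀ R : ℝ, 0 ≤ R → R < 1 →
      R ^ 2 / (1 - R) ^ 2 + (R + 2 * β * W) / (1 - R) + 1 / 4 <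
        (1 + (1 + R) / (2 * (1 - R))) ^ 2) := by
  constructor
  · intro p hp0 hp1
    have hG : G W p β < 1 := by
      unfold G
      set R := 1 - (1 - p) * W with hR
      have hR1 : R < 1 := by
        have : 0 < (1 - p) * W := mul_pos (by linarith) hW0
        simp only [hR]; linarith
      have ha : (0:ℝ) < 1 - R := by linarith
      have hpos : (0:ℝ) < 1 + (1 + R) / (2 * (1 - R)) := by
        have hR0 : 0 ≤ R := by
          have : (1 - p) * W ≤ 1 := by
            nlinarith
          simp only [hR]; linarith
        positivity
      have hs := (Real.sqrt_lt' hpos).2 (key_ineq β W R h hR1)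
      have hne : -(1 + R) / (2 * (1 - R)) = -((1 + R) / (2 * (1 - R))) := by ring
      simp only []
      rw [hne]
      linarith
    refine ⟨hG, ?_⟩
    have : ⌈G W p β⌉ ≤ 1 := by
      calc ⌈G W p β⌉ ≤ ⌈(1:ℝ)⌉ := Int.ceil_le_ceil hG.le
        _ = 1 := by norm_num
    omega
  · intro R _ hR1
    exact key_ineq β W R h hR1
end

section
/- (Theorem 5(iii).) If β > 0, then for each fixed p ∈ [0,1) the threshold function W ↦ G(W, p; β) is strictly increasing on (0, 1]: for all 0 < W₁ < W₂ ≤ 1, G(W₁, p; β) < G(W₂, p; β). -/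
lemma G_form (W p β : ℝ) (hW : 0 < W) (hp : p < 1) :
    G W p β = ((1 - p) * W - 2 +
      2 * Real.sqrt ((1 - (1 - p) * W / 2) ^ 2 + 2 * β * W * ((1 - p) * W))) /
      (2 * ((1 - p) * W)) := by
  have hx : 0 < (1 - p) * W := by nlinarith
  show -(1 + (1 - (1 - p) * W)) / (2 * (1 - (1 - (1 - p) * W))) +
      Real.sqrt ((1 - (1 - p) * W) ^ 2 / (1 - (1 - (1 - p) * W)) ^ 2 +
        ((1 - (1 - p) * W) + 2 * β * W) / (1 - (1 - (1 - p) * W)) + 1 / 4) = _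
  have harg : (1 - (1 - p) * W) ^ 2 / (1 - (1 - (1 - p) * W)) ^ 2 +
        ((1 - (1 - p) * W) + 2 * β * W) / (1 - (1 - (1 - p) * W)) + 1 / 4
      = ((1 - (1 - p) * W / 2) ^ 2 + 2 * β * W * ((1 - p) * W)) / ((1 - p) * W) ^ 2 := by
    generalize (1 - p) * W = x at hx ⊢
    rw [show 1 - (1 - x) = x by ring]
    field_simp
    ring
  rw [harg, Real.sqrt_div' _ (by positivity), Real.sqrt_sq hx.le]
  generalize (1 - p) * W = x at hx ⊢
  rw [show 1 - (1 - x) = x by ring]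
  field_simp
  ring

lemma key_ineq_s17 (b x₁ x₂ : ℝ) (hb : 0 < b) (hx₁ : 0 < x₁) (hlt : x₁ < x₂)
    (hx₂1 : x₂ ≤ 1) :
    (x₁ - 2 + 2 * Real.sqrt ((1 - x₁ / 2) ^ 2 + 2 * b * x₁ ^ 2)) / (2 * x₁) <
    (x₂ - 2 + 2 * Real.sqrt ((1 - x₂ / 2) ^ 2 + 2 * b * x₂ ^ 2)) / (2 * x₂) := by
  have hx₂ : 0 < x₂ := lt_trans hx₁ hlt
  have hT₁ : (0:ℝ) ≤ (1 - x₁ / 2) ^ 2 + 2 * b * x₁ ^ 2 := by positivity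
  have hT₂ : (0:ℝ) ≤ (1 - x₂ / 2) ^ 2 + 2 * b * x₂ ^ 2 := by positivity
  obtain ⟨t₁, ht₁0, ht₁sq⟩ : ∃ t : ℝ, 0 ≤ t ∧ t ^ 2 = (1 - x₁ / 2) ^ 2 + 2 * b * x₁ ^ 2 ∧
      Real.sqrt ((1 - x₁ / 2) ^ 2 + 2 * b * x₁ ^ 2) = t :=
    ⟨_, Real.sqrt_nonneg _, Real.sq_sqrt hT₁, rfl⟩
  obtain ⟨ht₁sq, ht₁⟩ := ht₁sq
  obtain ⟨t₂, ht₂0, ht₂sq⟩ : ∃ t : ℝ, 0 ≤ t ∧ t ^ 2 = (1 - x₂ / 2) ^ 2 + 2 * b * x₂ ^ 2 ∧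
      Real.sqrt ((1 - x₂ / 2) ^ 2 + 2 * b * x₂ ^ 2) = t :=
    ⟨_, Real.sqrt_nonneg _, Real.sq_sqrt hT₂, rfl⟩
  obtain ⟨ht₂sq, ht₂⟩ := ht₂sq
  rw [ht₁, ht₂, div_lt_div_iff₀ (by positivity) (by positivity)]
  -- lower bound on t₂
  have h2 : (0:ℝ) ≤ 1 - x₂ / 2 := by linarith
  have ht₂lb : 1 - x₂ / 2 < t₂ := by
    nlinarith [mul_pos (mul_pos hb hx₂) hx₂]
  have key : x₂ * t₁ < x₁ * t₂ + (x₂ - x₁) := by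
    nlinarith [mul_pos (mul_pos (sub_pos.mpr hlt) hx₁) (by linarith : (0:ℝ) < x₂ - 2 + 2 * t₂),
      mul_nonneg hx₂.le ht₁0, mul_nonneg hx₁.le ht₂0]
  nlinarith [key]

/-- Theorem 5(iii): for `β > 0` and fixed `p ∈ [0,1)`, the threshold function
`W ↦ G(W, p; β)` is strictly increasing on `(0, 1]`. -/
theorem G_strictMono_in_W (β : ℝ) (hβ : 0 < β) :
    ∀ p : ℝ, 0 ≤ p → p < 1 →
      ∀ W₁ W₂ : ℝ, 0 < W₁ → W₁ < W₂ → W₂ ≤ 1 → G W₁ p β < G W₂ p β := by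
  intro p hp0 hp1 W₁ W₂ hW₁ h12 hW₂1
  have hW₂ : 0 < W₂ := lt_trans hW₁ h12
  have hq : 0 < 1 - p := by linarith
  have hb : 0 < β / (1 - p) := div_pos hβ hq
  have e₁ : 2 * β * W₁ * ((1 - p) * W₁) = 2 * (β / (1 - p)) * ((1 - p) * W₁) ^ 2 := by
    field_simp
  have e₂ : 2 * β * W₂ * ((1 - p) * W₂) = 2 * (β / (1 - p)) * ((1 - p) * W₂) ^ 2 := by
    field_simp
  rw [G_form W₁ p β hW₁ hp1, G_form W₂ p β hW₂ hp1, e₁, e₂]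
  exact key_ineq_s17 (β / (1 - p)) _ _ hb (by nlinarith)
    (by have := mul_lt_mul_of_pos_left h12 hq; linarith) (by nlinarith)
end
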